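/- For positive definite matrices A, B and ν ∈ [0,1], trace(B²) + 2·trace(A^(1+ν)·B^(1-ν)) ≥ trace(A^(2ν)·B^(2(1-ν))) + 2·trace(AB). -/

import Mathlib

open Matrix MeasureTheory
open scoped ComplexOrder

/-- Apply a real function to a Hermitian matrix via the spectral decomposition. -/
noncomputable def matFun {n : ℕ} (A : Matrix (Fin n) (Fin n) ℂ) (hA : A.IsHermitian)
    (g : ℝ → ℝ) : Matrix (Fin n) (Fin n) ℂ :=
  (hA.eigenvectorUnitary : Matrix (Fin n) (Fin n) ℂ) *
    Matrix.diagonal (fun i => (g (hA.eigenvalues i) : ℂ)) *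
    star (hA.eigenvectorUnitary : Matrix (Fin n) (Fin n) ℂ)

/-- Real power of a Hermitian matrix via the spectral decomposition. -/
noncomputable def mpow {n : ℕ} (A : Matrix (Fin n) (Fin n) ℂ) (hA : A.IsHermitian)
    (p : ℝ) : Matrix (Fin n) (Fin n) ℂ :=
  matFun A hA (fun x => x ^ p)

/-- Hilbert-Schmidt (Frobenius) norm of a matrix. -/
noncomputable def frob {n : ℕ} (X : Matrix (Fin n) (Fin n) ℂ) : ℝ :=
  Real.sqrt (Matrix.trace (star X * X)).re

lemma scalar_ineq12 {a b ν : ℝ} (ha : 0 < a) (hb : 0 < b) (hν0 : 0 ≤ ν) (hν1 : ν ≤ 1) :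
    a ^ (2*ν) * b ^ (2*(1-ν)) + 2 * (a * b) ≤ b * b + 2 * (a ^ (1+ν) * b ^ (1-ν)) := by
  set p := a ^ ν with hp
  set q := b ^ ν with hq
  set s := b ^ (1-ν) with hs
  have hps : 0 < p := Real.rpow_pos_of_pos ha ν
  have hqs : 0 < q := Real.rpow_pos_of_pos hb ν
  have hss : 0 < s := Real.rpow_pos_of_pos hb (1-ν)
  have e1 : a ^ (2*ν) = p * p := by rw [hp, ← Real.rpow_add ha, two_mul]
  have e2 : b ^ (2*(1-ν)) = s * s := by rw [hs, ← Real.rpow_add hb]; ring_nf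
  have e3 : a ^ (1+ν) = a * p := by rw [hp, Real.rpow_add ha, Real.rpow_one]
  have e4 : b = q * s := by rw [hq, hs, ← Real.rpow_add hb]; norm_num
  have key : (p - q) * (s * (p + q) - 2 * a) ≤ 0 := by
    rcases le_total a b with hab | hab
    · apply mul_nonpos_of_nonpos_of_nonneg
      · simp only [hp, hq, sub_nonpos]
        exact Real.rpow_le_rpow ha.le hab hν0
      · have h1 : a ≤ p * s := by
          calc a = a ^ ν * a ^ (1-ν) := by rw [← Real.rpow_add ha]; norm_num
          _ ≤ p * s := by
            apply mul_le_mul_of_nonneg_left _ hps.le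
            exact Real.rpow_le_rpow ha.le hab (by linarith)
        have h2 : a ≤ q * s := by rw [← e4]; exact hab
        nlinarith
    · apply mul_nonpos_of_nonneg_of_nonpos
      · simp only [hp, hq, sub_nonneg]
        exact Real.rpow_le_rpow hb.le hab hν0
      · have h1 : p * s ≤ a := by
          calc p * s ≤ a ^ ν * a ^ (1-ν) := by
                apply mul_le_mul_of_nonneg_left _ hps.le
                exact Real.rpow_le_rpow hb.le hab (by linarith)
          _ = a := by rw [← Real.rpow_add ha]; norm_num
        have h2 : q * s ≤ a := by rw [← e4]; exact hab
        nlinarith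
  have key2 : ((p - q) * (s * (p + q) - 2 * a)) * s ≤ 0 :=
    mul_nonpos_of_nonpos_of_nonneg key hss.le
  rw [e1, e2, e3]
  nth_rewrite 1 [e4]
  nth_rewrite 2 [e4]
  nlinarith [key2]

lemma trace_conj_conj12 {n : ℕ} (U V : Matrix (Fin n) (Fin n) ℂ) (d e : Fin n → ℂ) :
    Matrix.trace (U * Matrix.diagonal d * star U * (V * Matrix.diagonal e * star V)) =
      ∑ i, ∑ j, d i * e j * ((star U * V) i j * star ((star U * V) i j)) := by
  set M := star U * V with hM
  have h1 : U * Matrix.diagonal d * star U * (V * Matrix.diagonal e * star V)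
      = U * (Matrix.diagonal d * M * Matrix.diagonal e * star V) := by
    rw [hM]; simp only [Matrix.mul_assoc]
  have h2 : Matrix.diagonal d * M * Matrix.diagonal e * star V * U
      = Matrix.diagonal d * M * Matrix.diagonal e * star M := by
    rw [hM, Matrix.star_mul, star_star, Matrix.mul_assoc]
  rw [h1, Matrix.trace_mul_comm, h2]
  rw [Matrix.trace]
  simp only [Matrix.diag_apply, Matrix.mul_apply, Matrix.diagonal_apply, ite_mul, zero_mul,
    mul_ite, mul_zero, Finset.sum_ite_eq, Finset.sum_ite_eq', Finset.mem_univ, if_true,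
    Matrix.star_apply]
  refine Finset.sum_congr rfl fun i _ => Finset.sum_congr rfl fun j _ => by ring

lemma trace_matFun_mul_matFun12 {n : ℕ} (A B : Matrix (Fin n) (Fin n) ℂ)
    (hA : A.IsHermitian) (hB : B.IsHermitian) (f g : ℝ → ℝ) :
    (Matrix.trace (matFun A hA f * matFun B hB g)).re =
      ∑ i, ∑ j, f (hA.eigenvalues i) * g (hB.eigenvalues j) *
        Complex.normSq ((star (hA.eigenvectorUnitary : Matrix (Fin n) (Fin n) ℂ) *
          (hB.eigenvectorUnitary : Matrix (Fin n) (Fin n) ℂ)) i j) := by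
  rw [matFun, matFun, trace_conj_conj12]
  rw [Complex.re_sum]
  refine Finset.sum_congr rfl fun i _ => ?_
  rw [Complex.re_sum]
  refine Finset.sum_congr rfl fun j _ => ?_
  set z := (star (hA.eigenvectorUnitary : Matrix (Fin n) (Fin n) ℂ) *
          (hB.eigenvectorUnitary : Matrix (Fin n) (Fin n) ℂ)) i j
  rw [show star z = (starRingEnd ℂ) z from rfl, Complex.mul_conj]
  simp

lemma sum_normSq_col12 {n : ℕ} (A B : Matrix (Fin n) (Fin n) ℂ)
    (hA : A.IsHermitian) (hB : B.IsHermitian) (j : Fin n) :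
    ∑ i, Complex.normSq ((star (hA.eigenvectorUnitary : Matrix (Fin n) (Fin n) ℂ) *
          (hB.eigenvectorUnitary : Matrix (Fin n) (Fin n) ℂ)) i j) = 1 := by
  set M := star (hA.eigenvectorUnitary : Matrix (Fin n) (Fin n) ℂ) *
          (hB.eigenvectorUnitary : Matrix (Fin n) (Fin n) ℂ) with hM
  have hMu : M ∈ Matrix.unitaryGroup (Fin n) ℂ := by
    rw [hM]
    exact mul_mem (Unitary.star_mem hA.eigenvectorUnitary.2) hB.eigenvectorUnitary.2
  have h1 : (star M * M) j j = 1 := by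
    rw [Matrix.mem_unitaryGroup_iff'.mp hMu]
    simp
  rw [Matrix.mul_apply] at h1
  have := congrArg Complex.re h1
  rw [Complex.re_sum] at this
  simp only [Complex.one_re] at this
  rw [← this]
  refine Finset.sum_congr rfl fun i _ => ?_
  rw [Matrix.star_apply, show star (M i j) = (starRingEnd ℂ) (M i j) from rfl]
  rw [show (starRingEnd ℂ) (M i j) * M i j = ((Complex.normSq (M i j) : ℝ) : ℂ) by
    rw [mul_comm, Complex.mul_conj]]
  simp

lemma matFun_id12 {n : ℕ} (A : Matrix (Fin n) (Fin n) ℂ) (hA : A.PosDef) :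
    matFun A hA.1 (fun x => x) = A := by
  have := hA.1.spectral_theorem
  rw [Unitary.conjStarAlgAut_apply] at this
  rw [matFun]
  exact this.symm

lemma trace_sq12 {n : ℕ} (B : Matrix (Fin n) (Fin n) ℂ) (hB : B.PosDef) :
    (Matrix.trace (B * B)).re = ∑ j, hB.1.eigenvalues j * hB.1.eigenvalues j := by
  set V := (hB.1.eigenvectorUnitary : Matrix (Fin n) (Fin n) ℂ) with hV
  have hsp := hB.1.spectral_theorem
  set d : Fin n → ℂ := RCLike.ofReal ∘ hB.1.eigenvalues with hd
  have h1 : B * B = V * (Matrix.diagonal d * Matrix.diagonal d) * star V := by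
    rw [hsp]
    have hVV : star V * V = 1 := Matrix.mem_unitaryGroup_iff'.mp hB.1.eigenvectorUnitary.2
    calc V * Matrix.diagonal d * star V * (V * Matrix.diagonal d * star V)
        = V * Matrix.diagonal d * (star V * V) * Matrix.diagonal d * star V := by
          simp only [Matrix.mul_assoc]
      _ = V * (Matrix.diagonal d * Matrix.diagonal d) * star V := by
          rw [hVV]; simp only [Matrix.mul_one, Matrix.mul_assoc]
  rw [h1, Matrix.trace_mul_comm, ← Matrix.mul_assoc,
    Matrix.mem_unitaryGroup_iff'.mp hB.1.eigenvectorUnitary.2, Matrix.one_mul,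
    Matrix.diagonal_mul_diagonal, Matrix.trace_diagonal, Complex.re_sum]
  refine Finset.sum_congr rfl fun j _ => ?_
  simp [hd]

theorem stmt12 {n : ℕ} (A B : Matrix (Fin n) (Fin n) ℂ)
    (hA : A.PosDef) (hB : B.PosDef) (ν : ℝ) (hν : ν ∈ Set.Icc (0:ℝ) 1) :
    (Matrix.trace (mpow A hA.1 (2 * ν) * mpow B hB.1 (2 * (1 - ν)))).re +
        2 * (Matrix.trace (A * B)).re ≤
      (Matrix.trace (B * B)).re +
        2 * (Matrix.trace (mpow A hA.1 (1 + ν) * mpow B hB.1 (1 - ν))).re := by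
  obtain ⟨hν0, hν1⟩ := hν
  set a := hA.1.eigenvalues with ha
  set b := hB.1.eigenvalues with hb
  set w : Fin n → Fin n → ℝ := fun i j =>
    Complex.normSq ((star (hA.1.eigenvectorUnitary : Matrix (Fin n) (Fin n) ℂ) *
          (hB.1.eigenvectorUnitary : Matrix (Fin n) (Fin n) ℂ)) i j) with hw
  have hap : ∀ i, 0 < a i := fun i => hA.eigenvalues_pos i
  have hbp : ∀ j, 0 < b j := fun j => hB.eigenvalues_pos j
  have hwn : ∀ i j, 0 ≤ w i j := fun i j => Complex.normSq_nonneg _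
  have t1 : (Matrix.trace (mpow A hA.1 (2 * ν) * mpow B hB.1 (2 * (1 - ν)))).re
      = ∑ i, ∑ j, a i ^ (2*ν) * b j ^ (2*(1-ν)) * w i j :=
    trace_matFun_mul_matFun12 A B hA.1 hB.1 _ _
  have t2 : (Matrix.trace (mpow A hA.1 (1 + ν) * mpow B hB.1 (1 - ν))).re
      = ∑ i, ∑ j, a i ^ (1+ν) * b j ^ (1-ν) * w i j :=
    trace_matFun_mul_matFun12 A B hA.1 hB.1 _ _
  have t3 : (Matrix.trace (A * B)).re = ∑ i, ∑ j, a i * b j * w i j := by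
    conv_lhs => rw [← matFun_id12 A hA, ← matFun_id12 B hB]
    exact trace_matFun_mul_matFun12 A B hA.1 hB.1 _ _
  have t4 : (Matrix.trace (B * B)).re = ∑ i, ∑ j, b j * b j * w i j := by
    rw [trace_sq12 B hB, Finset.sum_comm]
    refine Finset.sum_congr rfl fun j _ => ?_
    rw [← Finset.mul_sum, hw]
    rw [sum_normSq_col12 A B hA.1 hB.1 j, mul_one]
  rw [t1, t2, t3, t4]
  rw [Finset.mul_sum, Finset.mul_sum, ← Finset.sum_add_distrib, ← Finset.sum_add_distrib]
  refine Finset.sum_le_sum fun i _ => ?_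
  rw [Finset.mul_sum, Finset.mul_sum, ← Finset.sum_add_distrib, ← Finset.sum_add_distrib]
  refine Finset.sum_le_sum fun j _ => ?_
  have := scalar_ineq12 (hap i) (hbp j) hν0 hν1
  nlinarith [mul_le_mul_of_nonneg_right this (hwn i j)]
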